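/- Reduction of the forced transport equation to the homogeneous one: let α>0, let η̄₀:[0,∞)→ℝ be continuous, and let Ω:[0,T]×[0,∞)×[0,2π]→ℝ be a C¹ function, continuous and compactly supported in (R,β) for each t, satisfying ∂_tΩ + (ℒ(Ω)/2α) sin(2β) ∂_βΩ = η̄₀(R) exp((1/2α)∫₀ᵗ ℒ(Ω(τ))(R) dτ). Define g(t,R,β) := Ω(t,R,β) − η̄₀(R) ∫₀ᵗ exp((1/2α)∫₀^τ ℒ(Ω(μ))(R) dμ) dτ. Then ℒ(Ω(t)) = ℒ(g(t)) for every t, and g solves the homogeneous equation ∂_tg + (ℒ(g)/2α) sin(2β) ∂_βg = 0 with g(0)=Ω(0). -/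

import Mathlib

open MeasureTheory Set Real Topology

noncomputable section

/-- the integral operator `ℒ(Ω)(R) = (1/π) ∫_R^∞ ∫₀^{2π} Ω(s,β) sin(2β)/s dβ ds` -/
def Lop (Ω : ℝ → ℝ → ℝ) (R : ℝ) : ℝ :=
  (1 / π) * ∫ s in Ioi R, (∫ β in (0:ℝ)..(2 * π), Ω s β * Real.sin (2 * β)) / s

/-- the reduced unknown
`g(t,R,β) = Ω(t,R,β) − η̄₀(R) ∫₀ᵗ exp((1/2α) ∫₀^τ ℒ(Ω(μ))(R) dμ) dτ` -/
def gRed (α : ℝ) (η₀ : ℝ → ℝ) (Ω : ℝ → ℝ → ℝ → ℝ) (t R β : ℝ) : ℝ :=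
  Ω t R β -
    η₀ R * ∫ τ in (0:ℝ)..t, Real.exp ((1 / (2 * α)) * ∫ μ in (0:ℝ)..τ, Lop (Ω μ) R)

lemma sin_two_integral : ∫ β in (0:ℝ)..(2*π), Real.sin (2*β) = 0 := by
  have h4 : Real.cos (2*(2*π)) = 1 := by
    rw [show (2:ℝ)*(2*π) = (2:ℤ)*(2*π) by norm_num, Real.cos_int_mul_two_pi]
  rw [intervalIntegral.integral_comp_mul_left Real.sin two_ne_zero]
  norm_num [integral_sin, h4]

lemma Lop_sub (Ωt : ℝ → ℝ → ℝ) (K : ℝ → ℝ)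
    (hc : Continuous fun p : ℝ × ℝ => Ωt p.1 p.2) (R : ℝ) :
    Lop (fun s β => Ωt s β - K s) R = Lop Ωt R := by
  have key : ∀ s : ℝ, (∫ β in (0:ℝ)..(2*π), (Ωt s β - K s) * Real.sin (2*β))
      = ∫ β in (0:ℝ)..(2*π), Ωt s β * Real.sin (2*β) := by
    intro s
    have c1 : Continuous fun β : ℝ => Ωt s β :=
      hc.comp (continuous_const.prodMk continuous_id)
    have csin : Continuous fun β : ℝ => Real.sin (2*β) :=
      Real.continuous_sin.comp (continuous_const.mul continuous_id)
    have h1 : IntervalIntegrable (fun β => Ωt s β * Real.sin (2*β)) volume 0 (2*π) :=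
      (c1.mul csin).intervalIntegrable _ _
    have h2 : IntervalIntegrable (fun β => K s * Real.sin (2*β)) volume 0 (2*π) :=
      (continuous_const.mul csin).intervalIntegrable _ _
    simp only [sub_mul]
    rw [intervalIntegral.integral_sub h1 h2, intervalIntegral.integral_const_mul,
      sin_two_integral, mul_zero, sub_zero]
  simp only [Lop, key]

theorem reduction_to_homogeneous_equation
    (α T : ℝ) (hα : 0 < α) (hT : 0 ≤ T)
    (η₀ : ℝ → ℝ) (hη₀ : Continuous η₀)
    (Ω : ℝ → ℝ → ℝ → ℝ)
    (hC1 : ContDiff ℝ 1 (fun p : ℝ × ℝ × ℝ => Ω p.1 p.2.1 p.2.2))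
    (hcont : ∀ t, Continuous fun p : ℝ × ℝ => Ω t p.1 p.2)
    (hsupp : ∀ t, HasCompactSupport fun p : ℝ × ℝ => Ω t p.1 p.2)
    (hPDE : ∀ t ∈ Icc (0:ℝ) T, ∀ R β : ℝ,
      derivWithin (fun t' => Ω t' R β) (Icc 0 T) t
          + Lop (Ω t) R / (2 * α) * Real.sin (2 * β) * deriv (fun b => Ω t R b) β
        = η₀ R * Real.exp ((1 / (2 * α)) * ∫ τ in (0:ℝ)..t, Lop (Ω τ) R)) :
    (∀ t ∈ Icc (0:ℝ) T, ∀ R : ℝ,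
      Lop (fun R' β' => gRed α η₀ Ω t R' β') R = Lop (Ω t) R) ∧
    (∀ R β : ℝ, gRed α η₀ Ω 0 R β = Ω 0 R β) ∧
    (∀ t ∈ Icc (0:ℝ) T, ∀ R β : ℝ,
      derivWithin (fun t' => gRed α η₀ Ω t' R β) (Icc 0 T) t
          + Lop (fun R' β' => gRed α η₀ Ω t R' β') R / (2 * α) * Real.sin (2 * β)
            * deriv (fun b => gRed α η₀ Ω t R b) β
        = 0) := by
  have hLop : ∀ t R, Lop (fun R' β' => gRed α η₀ Ω t R' β') R = Lop (Ω t) R := by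
    intro t R
    exact Lop_sub (Ω t)
      (fun R' => η₀ R' * ∫ τ in (0:ℝ)..t,
        Real.exp ((1 / (2 * α)) * ∫ μ in (0:ℝ)..τ, Lop (Ω μ) R')) (hcont t) R
  have hslice : ∀ (R' β' : ℝ), ContDiff ℝ 1 (fun t' => Ω t' R' β') := by
    intro R' β'
    have hrw : (fun t' => Ω t' R' β')
        = ((fun p : ℝ × ℝ × ℝ => Ω p.1 p.2.1 p.2.2) ∘ fun t' : ℝ => (t', R', β')) := rfl
    rw [hrw]
    exact hC1.comp (contDiff_id.prodMk contDiff_const)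
  refine ⟨fun t _ R => hLop t R, ?_, ?_⟩
  · intro R β; simp [gRed]
  · intro t ht R β
    have hderivβ : deriv (fun b => gRed α η₀ Ω t R b) β = deriv (fun b => Ω t R b) β := by
      simp only [gRed]; exact deriv_sub_const _
    rw [hLop t R, hderivβ]
    rcases eq_or_lt_of_le hT with hT0 | hTpos
    · -- T = 0
      subst hT0
      have htt : t = 0 := le_antisymm ht.2 ht.1
      subst htt
      have hiso : 𝓝[Icc (0:ℝ) 0 \ {0}] (0:ℝ) = ⊥ := by
        rw [Icc_self]; simp
      have h0 := hPDE 0 (by simp) R 0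
      rw [derivWithin_zero_of_not_accPt (x := (0:ℝ)) (s := Icc (0:ℝ) 0) (by rw [accPt_principal_iff_nhdsWithin, hiso]; exact fun h => h.ne rfl)] at h0
      norm_num at h0
      have hη : η₀ R = 0 := by
        first | exact h0.symm | exact h0 | linarith [h0]
      have h1 := hPDE 0 (by simp) R β
      rw [derivWithin_zero_of_not_accPt (x := (0:ℝ)) (s := Icc (0:ℝ) 0) (by rw [accPt_principal_iff_nhdsWithin, hiso]; exact fun h => h.ne rfl)] at h1
      rw [derivWithin_zero_of_not_accPt (x := (0:ℝ)) (s := Icc (0:ℝ) 0) (by rw [accPt_principal_iff_nhdsWithin, hiso]; exact fun h => h.ne rfl)]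
      simp [hη] at h1 ⊢
      first | exact h1 | linarith [h1]
    · -- 0 < T
      have hUD : UniqueDiffWithinAt ℝ (Icc (0:ℝ) T) t := uniqueDiffOn_Icc hTpos t ht
      have hφcont : Continuous (fun τ => deriv (fun t' => Ω t' R 0) τ) :=
        (hslice R 0).continuous_deriv le_rfl
      have hA : ∀ τ ∈ Icc (0:ℝ) T, deriv (fun t' => Ω t' R 0) τ
          = η₀ R * Real.exp ((1 / (2 * α)) * ∫ μ in (0:ℝ)..τ, Lop (Ω μ) R) := by
        intro τ hτ
        have h0 := hPDE τ hτ R 0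
        simp only [mul_zero, Real.sin_zero, zero_mul, mul_zero, add_zero] at h0
        rw [← h0]
        exact ((((hslice R 0).differentiable one_ne_zero) τ).derivWithin
          (uniqueDiffOn_Icc hTpos τ hτ)).symm
      have hF2 : HasDerivWithinAt (fun u => ∫ τ in (0:ℝ)..u, deriv (fun t' => Ω t' R 0) τ)
          (deriv (fun t' => Ω t' R 0) t) (Icc (0:ℝ) T) t :=
        (intervalIntegral.integral_hasDerivAt_right (hφcont.intervalIntegrable _ _)
          hφcont.aestronglyMeasurable.stronglyMeasurableAtFilter
          hφcont.continuousAt).hasDerivWithinAt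
      have hEq : ∀ u ∈ Icc (0:ℝ) T,
          η₀ R * (∫ τ in (0:ℝ)..u,
              Real.exp ((1 / (2 * α)) * ∫ μ in (0:ℝ)..τ, Lop (Ω μ) R))
            = ∫ τ in (0:ℝ)..u, deriv (fun t' => Ω t' R 0) τ := by
        intro u hu
        rw [← intervalIntegral.integral_const_mul]
        refine intervalIntegral.integral_congr fun τ hτ => ?_
        have hτ' : τ ∈ Icc (0:ℝ) T := by
          rw [uIcc_of_le hu.1] at hτ
          exact ⟨hτ.1, hτ.2.trans hu.2⟩
        exact (hA τ hτ').symm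
      have hF1 : HasDerivWithinAt
          (fun u => η₀ R * ∫ τ in (0:ℝ)..u,
            Real.exp ((1 / (2 * α)) * ∫ μ in (0:ℝ)..τ, Lop (Ω μ) R))
          (deriv (fun t' => Ω t' R 0) t) (Icc (0:ℝ) T) t := by
        refine hF2.congr_of_eventuallyEq ?_ (hEq t ht)
        filter_upwards [self_mem_nhdsWithin] with u hu using hEq u hu
      have hΩd : HasDerivWithinAt (fun t' => Ω t' R β)
          (derivWithin (fun t' => Ω t' R β) (Icc (0:ℝ) T) t) (Icc (0:ℝ) T) t :=
        ((((hslice R β).differentiable one_ne_zero) t).differentiableWithinAt).hasDerivWithinAt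
      have hg : HasDerivWithinAt (fun t' => gRed α η₀ Ω t' R β)
          (derivWithin (fun t' => Ω t' R β) (Icc (0:ℝ) T) t - deriv (fun t' => Ω t' R 0) t)
          (Icc (0:ℝ) T) t := by
        exact hΩd.sub hF1
      rw [hg.derivWithin hUD]
      have hP := hPDE t ht R β
      have hAt := hA t ht
      linarith [hP, hAt]
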